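/- arXiv:1701.07768 — 2 statements merged into one kernel-verified Lean document; each statement's English description precedes it below -/
import Mathlib

section
/- For every finitely generated group G, there exists a natural epimorphism of graded ℚ-Lie algebras Φ_G: 𝔥(G) ↠ gr(G;ℚ), restricting to the identity on H₁(G;ℚ) in degree 1, which is an isomorphism in degrees 1 and 2. -/
open TensorProduct
open scoped commutatorElement

noncomputable section

namespace ArXiv170107768

/-! ### Fox calculus and Magnus coefficients for free groups -/

/-- The integral group ring `ℤF` of the free group on `n` generators. -/
abbrev GrpRing (n : ℕ) := MonoidAlgebra ℤ (FreeGroup (Fin n))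

/-- Auxiliary group used to define Fox derivatives: pairs `(g, d)` with
multiplication `(g, d) * (h, e) = (g h, d + g·e)`, encoding the Fox product rule
`∂(uv) = ∂u · ε(v) + u · ∂v`. -/
def FoxPair (n : ℕ) := FreeGroup (Fin n) × GrpRing n

instance (n : ℕ) : Group (FoxPair n) where
  mul a b := (a.1 * b.1, a.2 + MonoidAlgebra.single a.1 1 * b.2)
  one := (1, 0)
  inv a := (a.1⁻¹, -(MonoidAlgebra.single a.1⁻¹ 1 * a.2))
  mul_assoc a b c := by
    refine Prod.ext (mul_assoc _ _ _) ?_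
    show (a.2 + MonoidAlgebra.single a.1 1 * b.2) + MonoidAlgebra.single (a.1 * b.1) 1 * c.2
        = a.2 + MonoidAlgebra.single a.1 1 * (b.2 + MonoidAlgebra.single b.1 1 * c.2)
    rw [mul_add, ← mul_assoc, MonoidAlgebra.single_mul_single, mul_one, add_assoc]
  one_mul a := by
    refine Prod.ext (one_mul _) ?_
    show 0 + MonoidAlgebra.single 1 1 * a.2 = a.2
    rw [← MonoidAlgebra.one_def, one_mul, zero_add]
  mul_one a := by
    refine Prod.ext (mul_one _) ?_
    show a.2 + MonoidAlgebra.single a.1 1 * 0 = a.2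
    rw [mul_zero, add_zero]
  inv_mul_cancel a := by
    refine Prod.ext (inv_mul_cancel _) ?_
    show -(MonoidAlgebra.single a.1⁻¹ 1 * a.2) + MonoidAlgebra.single a.1⁻¹ 1 * a.2 = 0
    exact neg_add_cancel _

/-- The group homomorphism `F → F ⋉ ℤF` whose second component is the `i`-th Fox
derivative (on group elements). It is determined by `x_j ↦ (x_j, δ_{ij})`. -/
def foxHom {n : ℕ} (i : Fin n) : FreeGroup (Fin n) →* FoxPair n :=
  FreeGroup.lift fun j => (FreeGroup.of j, if j = i then 1 else 0)

/-- The `i`-th Fox derivative `∂_i : ℤF → ℤF`, extended `ℤ`-linearly from group elements. -/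
def foxD {n : ℕ} (i : Fin n) : GrpRing n →ₗ[ℤ] GrpRing n :=
  Finsupp.linearCombination ℤ (fun g => (foxHom i g).2) ∘ₗ
    (MonoidAlgebra.coeffLinearEquiv ℤ).toLinearMap

/-- The augmentation map `ε : ℤF → ℤ`. -/
def aug {n : ℕ} : GrpRing n →ₗ[ℤ] ℤ :=
  Finsupp.linearCombination ℤ (fun _ => (1 : ℤ)) ∘ₗ
    (MonoidAlgebra.coeffLinearEquiv ℤ).toLinearMap

/-- For a multi-index `I = (i₁, …, i_s)`, the iterated Fox derivative coefficient
`ε_I(w) = ε(∂_{i₁}(∂_{i₂}(⋯ ∂_{i_s}(w))))`; this is the coefficient of `x_{i₁}⋯x_{i_s}`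
in the classical Magnus expansion of `w`. -/
def epsI {n : ℕ} (I : List (Fin n)) (w : FreeGroup (Fin n)) : ℤ :=
  aug (I.foldr (fun i x => foxD i x) (MonoidAlgebra.single w 1))

/-- The coefficients of the Magnus `κ`-expansion relative to the `b × n` matrix `a` of
`π = H₁(φ; ℚ)`:  `κ(w)_{(i₁,…,i_k)} = Σ_{s₁,…,s_k} a_{i₁ s₁} ⋯ a_{i_k s_k} ε_{(s₁,…,s_k)}(w)`. -/
def kappaCoeff {n b : ℕ} (a : Fin b → Fin n → ℚ) (w : FreeGroup (Fin n))
    (I : List (Fin b)) : ℚ :=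
  ∑ σ : Fin I.length → Fin n, (∏ j, a (I.get j) (σ j)) * (epsI (List.ofFn σ) w : ℚ)

/-- The degree-2 part of the Magnus `κ`-expansion, viewed in the free Lie algebra:
`κ₂(w) = Σ_{i<j} κ(w)_{i,j} [y_i, y_j]`. -/
def kappa2El {n b : ℕ} (a : Fin b → Fin n → ℚ) (w : FreeGroup (Fin n)) :
    FreeLieAlgebra ℚ (Fin b) :=
  ∑ i : Fin b, ∑ j : Fin b,
    if (i : ℕ) < (j : ℕ) then
      kappaCoeff a w [i, j] • ⁅FreeLieAlgebra.of ℚ i, FreeLieAlgebra.of ℚ j⁆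
    else 0

/-- The `m × n` matrix `E` is in row-echelon form with `d` nonzero rows and pivots `p`. -/
structure IsRowEchelonWith {m n : ℕ} (E : Fin m → Fin n → ℤ) (d : ℕ)
    (p : Fin d → Fin n) : Prop where
  le_m : d ≤ m
  mono : StrictMono p
  pivot_ne : ∀ (k : Fin d) (hk : (k : ℕ) < m), E ⟨k, hk⟩ (p k) ≠ 0
  pivot_lead : ∀ (k : Fin d) (hk : (k : ℕ) < m) (j : Fin n), (j : ℕ) < (p k : ℕ) →
    E ⟨k, hk⟩ j = 0
  zero_rows : ∀ k : Fin m, d ≤ (k : ℕ) → ∀ j, E k j = 0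

/-! ### Lower central series and the rational associated graded Lie algebra -/

/-- The lower central series with the paper's indexing: `Γ₁ G = G`, `Γ_{k+1} G = [Γ_k G, G]`. -/
def gammaP (G : Type*) [Group G] (k : ℕ) : Subgroup G := (⊤ : Subgroup G).lowerCentralSeries (k - 1)

instance (G : Type*) [Group G] (k : ℕ) : (gammaP G k).Normal := by
  unfold gammaP; infer_instance

lemma mem_gammaP_one {G : Type*} [Group G] (g : G) : g ∈ gammaP G 1 := by
  show g ∈ (⊤ : Subgroup G).lowerCentralSeries 0
  rw [Subgroup.lowerCentralSeries_zero]; trivial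

lemma commElt_mem_gammaP_two {G : Type*} [Group G] (x y : G) : ⁅x, y⁆ ∈ gammaP G 2 := by
  show ⁅x, y⁆ ∈ (⊤ : Subgroup G).lowerCentralSeries 1
  rw [Subgroup.top_lowerCentralSeries_one, commutator_def]
  exact Subgroup.commutator_mem_commutator (Subgroup.mem_top x) (Subgroup.mem_top y)

/-- The quotient group `Γ_k G / Γ_{k+1} G`. -/
def lcsQuot (G : Type*) [Group G] (k : ℕ) :=
  (gammaP G k) ⧸ ((gammaP G (k + 1)).subgroupOf (gammaP G k))

instance (G : Type*) [Group G] (k : ℕ) : Group (lcsQuot G k) := by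
  unfold lcsQuot; infer_instance

/-- The degree-`k` piece `gr_k(G; ℚ) = (Γ_k G / Γ_{k+1} G) ⊗ ℚ` of the rational associated
graded Lie algebra.  (The quotient `Γ_k/Γ_{k+1}` is abelian, so passing through its
abelianization is the identity.) -/
def grQ (G : Type*) [Group G] (k : ℕ) :=
  ℚ ⊗[ℤ] (Additive (Abelianization (lcsQuot G k)))

instance (G : Type*) [Group G] (k : ℕ) : AddCommGroup (grQ G k) := by
  unfold grQ; infer_instance

instance (G : Type*) [Group G] (k : ℕ) : Module ℚ (grQ G k) := by
  unfold grQ; infer_instance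

/-- The class in `gr_k(G; ℚ)` of an element of `Γ_k G`. -/
def grCls (G : Type*) [Group G] (k : ℕ) (x : gammaP G k) : grQ G k :=
  (1 : ℚ) ⊗ₜ[ℤ] Additive.ofMul (Abelianization.of (QuotientGroup.mk x : lcsQuot G k))

/-! ### Models of `H₁(G;ℚ)`, of `gr(G;ℚ)` as a graded Lie algebra, and of `𝔥(G)` -/

/-- `(V, cls)` is a model of `H₁(G; ℚ) = G_{ab} ⊗ ℚ` together with its canonical class map. -/
structure IsH1Q (G : Type u) [Group G] (V : Type v) [AddCommGroup V] [Module ℚ V]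
    (cls : G → V) : Prop where
  map_mul : ∀ x y : G, cls (x * y) = cls x + cls y
  ker : ∀ x : G, cls x = 0 ↔ ∃ k : ℕ, 0 < k ∧ x ^ k ∈ commutator G
  span : Submodule.span ℚ (Set.range cls) = ⊤

/-- `(L, Lk, cls)` is a model of the rational associated graded Lie algebra
`gr(G; ℚ) = ⊕_{k ≥ 1} (Γ_k G/Γ_{k+1} G) ⊗ ℚ`, with `Lk k` the degree-`k` piece and
`cls k : Γ_k G → L` the canonical class maps; the Lie bracket is induced by the
group commutator. -/
structure IsGrLie (G : Type u) [Group G] (L : Type v) [LieRing L] [LieAlgebra ℚ L]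
    (Lk : ℕ → Submodule ℚ L) (cls : ∀ k : ℕ, (gammaP G k) → L) : Prop where
  internal : DirectSum.IsInternal Lk
  zero : Lk 0 = ⊥
  mem : ∀ (k : ℕ) (x : gammaP G k), cls k x ∈ Lk k
  map_mul : ∀ (k : ℕ) (x y : gammaP G k), cls k (x * y) = cls k x + cls k y
  ker : ∀ (k : ℕ) (x : gammaP G k),
    cls k x = 0 ↔ ∃ j : ℕ, 0 < j ∧ (x : G) ^ j ∈ gammaP G (k + 1)
  span : ∀ k : ℕ, Lk k = Submodule.span ℚ (Set.range (cls k))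
  bracket : ∀ (j k : ℕ) (x : gammaP G j) (y : gammaP G k)
      (h : ⁅(x : G), (y : G)⁆ ∈ gammaP G (j + k)),
      ⁅cls j x, cls k y⁆ = cls (j + k) ⟨⁅(x : G), (y : G)⁆, h⟩

/-- The finite family `(c_i, x_i, y_i)` represents `0` in `gr₂(G; ℚ)`; equivalently, the
corresponding element `Σ c_i · (x̄_i ∧ ȳ_i)` of `⋀² H₁(G;ℚ)` lies in the kernel of the Lie
bracket map `⋀² H₁(G;ℚ) → gr₂(G;ℚ)`. -/
def GrTrivial (G : Type*) [Group G] (s : Finset ℕ) (c : ℕ → ℚ) (x y : ℕ → G) : Prop :=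
  ∑ i ∈ s, c i • grCls G 2 ⟨⁅x i, y i⁆, commElt_mem_gammaP_two _ _⟩ = 0

/-- `(H, ι)` is a model of the holonomy Lie algebra `𝔥(G)`: the quotient of the free
Lie algebra on `H₁(G; ℚ)` by the ideal generated by the kernel of the Lie bracket map
`⋀² H₁(G;ℚ) → gr₂(G;ℚ)` (equivalently, by the image of the dual of the cup product).
Here `ι : G → H` is the composite of the class map `G → H₁(G;ℚ)` with the inclusion of
the degree-one part, and `H` is characterized by the universal property of this quotient. -/
structure IsHolonomy (G : Type u) [Group G] (H : Type v) [LieRing H] [LieAlgebra ℚ H]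
    (ι : G → H) : Prop where
  map_mul : ∀ x y : G, ι (x * y) = ι x + ι y
  ker : ∀ x : G, ι x = 0 ↔ ∃ k : ℕ, 0 < k ∧ x ^ k ∈ commutator G
  gen : LieSubalgebra.lieSpan ℚ H (Set.range ι) = ⊤
  rel : ∀ (s : Finset ℕ) (c : ℕ → ℚ) (x y : ℕ → G), GrTrivial G s c x y →
      ∑ i ∈ s, c i • ⁅ι (x i), ι (y i)⁆ = 0
  univ : ∀ (M : Type (max u v)) [LieRing M] [LieAlgebra ℚ M] (f : G → M),
      (∀ x y : G, f (x * y) = f x + f y) →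
      (∀ (s : Finset ℕ) (c : ℕ → ℚ) (x y : ℕ → G), GrTrivial G s c x y →
        ∑ i ∈ s, c i • ⁅f (x i), f (y i)⁆ = 0) →
      ∃! F : H →ₗ⁅ℚ⁆ M, ∀ g : G, F (ι g) = f g

/-! ### Gradings -/

/-- The standard grading determined by a degree-one piece `V` of a Lie algebra generated in
degree one: `lieDeg V 1 = V` and `lieDeg V (k+1) = span ⁅V, lieDeg V k⁆`. -/
def lieDeg {L : Type*} [LieRing L] [LieAlgebra ℚ L] (V : Submodule ℚ L) :
    ℕ → Submodule ℚ L
  | 0 => ⊥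
  | 1 => V
  | (k + 2) => Submodule.span ℚ {z | ∃ x ∈ V, ∃ y ∈ lieDeg V (k + 1), z = ⁅x, y⁆}

/-- The canonical grading of (a model of) the holonomy Lie algebra `𝔥(G)`, with
`H₁(G;ℚ)` in degree one. -/
def holDeg {G : Type u} [Group G] {H : Type v} [LieRing H] [LieAlgebra ℚ H]
    (ι : G → H) (k : ℕ) : Submodule ℚ H :=
  lieDeg (Submodule.span ℚ (Set.range ι)) k

/-- Two Lie algebras with specified gradings are isomorphic as graded Lie algebras. -/
def IsGradedLieIso {L₁ : Type u} {L₂ : Type v} [LieRing L₁] [LieAlgebra ℚ L₁]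
    [LieRing L₂] [LieAlgebra ℚ L₂] (d₁ : ℕ → Submodule ℚ L₁) (d₂ : ℕ → Submodule ℚ L₂) :
    Prop :=
  ∃ e : L₁ ≃ₗ⁅ℚ⁆ L₂, ∀ k, (d₁ k).map (e.toLinearEquiv.toLinearMap) = d₂ k

/-! ### Finitely presented Lie algebras -/

/-- The degree-one part of the free Lie algebra on the generating set `X`. -/
def flV (X : Type*) : Submodule ℚ (FreeLieAlgebra ℚ X) :=
  Submodule.span ℚ (Set.range (FreeLieAlgebra.of ℚ))

/-- The quotient of the free Lie algebra on the generating set `X` by the Lie ideal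
generated by the set `S`. -/
def presLie (X : Type*) (S : Set (FreeLieAlgebra ℚ X)) :=
  (FreeLieAlgebra ℚ X) ⧸ (LieSubmodule.lieSpan ℚ (FreeLieAlgebra ℚ X) S)

instance (X : Type*) (S : Set (FreeLieAlgebra ℚ X)) : LieRing (presLie X S) := by
  unfold presLie; infer_instance

instance (X : Type*) (S : Set (FreeLieAlgebra ℚ X)) : LieAlgebra ℚ (presLie X S) := by
  unfold presLie; infer_instance

/-- The induced grading on `presLie X S` (images of the graded pieces of the free
Lie algebra). -/
def presDeg (X : Type*) (S : Set (FreeLieAlgebra ℚ X)) (k : ℕ) :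
    Submodule ℚ (presLie X S) :=
  (lieDeg (flV X) k).map
    (LieSubmodule.Quotient.mk' (LieSubmodule.lieSpan ℚ (FreeLieAlgebra ℚ X) S)).toLinearMap

/-- `G` is graded-formal: the canonical surjection `Φ_G : 𝔥(G) ↠ gr(G;ℚ)` (the morphism
restricting to the identity of `H₁(G;ℚ)` in degree one) is an isomorphism. -/
def GradedFormal (G : Type u) [Group G] : Prop :=
  ∀ (H : Type u) [LieRing H] [LieAlgebra ℚ H] (ι : G → H)
    (L : Type u) [LieRing L] [LieAlgebra ℚ L] (Lk : ℕ → Submodule ℚ L)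
    (cls : ∀ k : ℕ, (gammaP G k) → L),
    IsHolonomy G H ι → IsGrLie G L Lk cls →
    ∀ Φ : H →ₗ⁅ℚ⁆ L, (∀ g : G, Φ (ι g) = cls 1 ⟨g, mem_gammaP_one g⟩) →
    Function.Bijective Φ



/-! ### Auxiliary lemmas -/

section AddLike
variable {M : Type*} [AddCommGroup M] {Gp : Type*} [Group Gp]
variable (f : Gp → M) (hf : ∀ x y, f (x * y) = f x + f y)

/-- Package an additive-on-mul map as a monoid hom into `Multiplicative M`. -/
def addLikeHom : Gp →* Multiplicative M :=
  MonoidHom.mk' (fun g => Multiplicative.ofAdd (f g)) fun x y => by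
    simp only [hf]; rfl

include hf

lemma addLike_one : f 1 = 0 := by
  have h := hf 1 1
  rw [one_mul] at h
  exact add_eq_right.mp h.symm

lemma addLike_inv (x : Gp) : f x⁻¹ = - f x := by
  have h := hf x x⁻¹
  rw [mul_inv_cancel, addLike_one f hf] at h
  exact eq_neg_of_add_eq_zero_right h.symm

lemma addLike_zpow (x : Gp) (m : ℤ) : f (x ^ m) = m • f x := by
  have h := map_zpow (addLikeHom f hf) x m
  have := congrArg Multiplicative.toAdd h
  simpa [addLikeHom] using this

lemma addLike_listprod (l : List Gp) : f l.prod = (l.map f).sum := by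
  induction l with
  | nil => simpa using addLike_one f hf
  | cons x t ih => simp [hf, ih]

lemma addLike_prod_ofFn {n : ℕ} (a : Fin n → Gp) (m : Fin n → ℤ) :
    f ((List.ofFn fun i => a i ^ m i).prod) = ∑ i, m i • f (a i) := by
  rw [addLike_listprod f hf, List.map_ofFn, Fin.sum_ofFn]
  exact Finset.sum_congr rfl fun i _ => addLike_zpow f hf _ _

end AddLike

lemma rat_clear {n : ℕ} (f : Fin n → ℚ) :
    ∃ (N : ℕ) (m : Fin n → ℤ), 0 < N ∧ ∀ i, (m i : ℚ) = f i * N := by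
  refine ⟨∏ j, (f j).den, fun i => (f i).num * (((∏ j, (f j).den) / (f i).den : ℕ) : ℤ), ?_, ?_⟩
  · exact Finset.prod_pos fun j _ => (f j).pos
  · intro i
    have hdvd : (f i).den ∣ ∏ j, (f j).den := Finset.dvd_prod_of_mem _ (Finset.mem_univ i)
    have hden : ((f i).den : ℚ) ≠ 0 := by exact_mod_cast (f i).den_ne_zero
    have hnum : ((f i).num : ℚ) = f i * (f i).den := (div_eq_iff hden).mp (Rat.num_div_den (f i))
    rw [Int.cast_mul, Int.cast_natCast, Nat.cast_div hdvd hden]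
    field_simp
    rw [hnum]
    ring

lemma gammaP_two_eq {G : Type*} [Group G] : gammaP G 2 = commutator G := Subgroup.top_lowerCentralSeries_one

lemma comm_mem_gammaP_succ {G : Type*} [Group G] (k : ℕ) (y : G)
    (hy : y ∈ gammaP G (k + 1)) (g : G) : ⁅y, g⁆ ∈ gammaP G (k + 2) := by
  show ⁅y, g⁆ ∈ (⊤ : Subgroup G).lowerCentralSeries (k + 1)
  rw [Subgroup.lowerCentralSeries_succ]
  exact Subgroup.subset_closure ⟨y, hy, g, Subgroup.mem_top g, rfl⟩


set_option linter.unusedSectionVars false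
section Chi
variable {G : Type*} [Group G] {L : Type*} [LieRing L] [LieAlgebra ℚ L]
variable (c : ↥(gammaP G 2) → L)

/-- Descent of `c` to the abelianization of `Γ₂/Γ₃`. -/
def chiAdd (hmul : ∀ x y, c (x * y) = c x + c y)
    (hker0 : ∀ x : ↥(gammaP G 2), (x : G) ∈ gammaP G 3 → c x = 0) :
    Additive (Abelianization (lcsQuot G 2)) →+ L :=
  AddMonoidHom.mk' (fun a => Multiplicative.toAdd
    ((Abelianization.lift (QuotientGroup.lift ((gammaP G 3).subgroupOf (gammaP G 2))
      (addLikeHom c hmul)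
      (fun x hx => by
        have h0 : c x = 0 := hker0 x (Subgroup.mem_subgroupOf.mp hx)
        rw [MonoidHom.mem_ker]
        simp [addLikeHom, h0]))) a.toMul))
    (fun a b => by
      exact congrArg Multiplicative.toAdd (map_mul _ (Additive.toMul a) (Additive.toMul b)))

lemma chiAdd_cls (hmul : ∀ x y, c (x * y) = c x + c y)
    (hker0 : ∀ x : ↥(gammaP G 2), (x : G) ∈ gammaP G 3 → c x = 0) (x : ↥(gammaP G 2)) :
    chiAdd c hmul hker0
      (Additive.ofMul (Abelianization.of (QuotientGroup.mk x : lcsQuot G 2))) = c x := rfl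

/-- The induced `ℤ`-linear map `gr₂(G;ℚ) → L`. -/
def chi (hmul : ∀ x y, c (x * y) = c x + c y)
    (hker0 : ∀ x : ↥(gammaP G 2), (x : G) ∈ gammaP G 3 → c x = 0) :
    grQ G 2 →ₗ[ℤ] L :=
  TensorProduct.lift (LinearMap.mk₂ ℤ (fun (q : ℚ) a => q • chiAdd c hmul hker0 a)
    (fun q r a => by rw [add_smul])
    (fun n q a => by rw [smul_assoc])
    (fun q a b => by rw [map_add, smul_add])
    (fun n q a => by
      rw [map_zsmul, ← Int.cast_smul_eq_zsmul ℚ, ← Int.cast_smul_eq_zsmul ℚ (M := L),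
        smul_smul, smul_smul, mul_comm]))

variable (hmul : ∀ x y, c (x * y) = c x + c y)
  (hker0 : ∀ x : ↥(gammaP G 2), (x : G) ∈ gammaP G 3 → c x = 0)

lemma chi_tmul (q : ℚ) (a : Additive (Abelianization (lcsQuot G 2))) :
    chi c hmul hker0 (show grQ G 2 from q ⊗ₜ[ℤ] a) = q • chiAdd c hmul hker0 a := by
  exact TensorProduct.lift.tmul q a

lemma chi_grCls (x : ↥(gammaP G 2)) : chi c hmul hker0 (grCls G 2 x) = c x := by
  rw [show grCls G 2 x = ((1:ℚ) ⊗ₜ[ℤ]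
    Additive.ofMul (Abelianization.of (QuotientGroup.mk x : lcsQuot G 2)) : grQ G 2) from rfl,
    chi_tmul, chiAdd_cls, one_smul]

lemma chi_smul_grCls (r : ℚ) (x : ↥(gammaP G 2)) :
    chi c hmul hker0 (r • grCls G 2 x) = r • c x := by
  have h : r • grCls G 2 x = ((r ⊗ₜ[ℤ]
      Additive.ofMul (Abelianization.of (QuotientGroup.mk x : lcsQuot G 2))) : grQ G 2) := by
    show r • ((1:ℚ) ⊗ₜ[ℤ] _ : grQ G 2) = _
    rw [TensorProduct.smul_tmul', smul_eq_mul, mul_one]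
  rw [h, chi_tmul, chiAdd_cls]

lemma grQ_rep (u : grQ G 2) : ∃ (N : ℕ) (a : Additive (Abelianization (lcsQuot G 2))),
    0 < N ∧ u = (((N : ℚ))⁻¹ ⊗ₜ[ℤ] a : grQ G 2) := by
  show ∃ (N : ℕ) (a : Additive (Abelianization (lcsQuot G 2))), 0 < N ∧
    u = ((N:ℚ))⁻¹ ⊗ₜ[ℤ] a
  induction u using TensorProduct.induction_on with
  | zero =>
    exact ⟨1, 0, one_pos, by rw [TensorProduct.tmul_zero]⟩
  | tmul q a =>
    refine ⟨q.den, q.num • a, q.pos, ?_⟩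
    have h : (q.num : ℤ) • ((q.den : ℚ))⁻¹ = q := by
      rw [zsmul_eq_mul, ← div_eq_mul_inv]
      exact Rat.num_div_den q
    rw [TensorProduct.tmul_smul, TensorProduct.smul_tmul', h]
  | add u v hu hv =>
    obtain ⟨N, a, hN, rfl⟩ := hu
    obtain ⟨M, b, hM, rfl⟩ := hv
    refine ⟨N * M, (M : ℤ) • a + (N : ℤ) • b, Nat.mul_pos hN hM, ?_⟩
    have hN0 : (N:ℚ) ≠ 0 := Nat.cast_ne_zero.mpr hN.ne'
    have hM0 : (M:ℚ) ≠ 0 := Nat.cast_ne_zero.mpr hM.ne'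
    have h1 : ((M:ℤ)) • (((N * M : ℕ) : ℚ))⁻¹ = ((N:ℚ))⁻¹ := by
      rw [zsmul_eq_mul]; push_cast; field_simp; all_goals ring
    have h2 : ((N:ℤ)) • (((N * M : ℕ) : ℚ))⁻¹ = ((M:ℚ))⁻¹ := by
      rw [zsmul_eq_mul]; push_cast; field_simp; all_goals ring
    rw [TensorProduct.tmul_add, TensorProduct.tmul_smul, TensorProduct.tmul_smul,
      TensorProduct.smul_tmul', TensorProduct.smul_tmul', h1, h2]

lemma chi_injective
    (hker2 : ∀ x : ↥(gammaP G 2), c x = 0 → ∃ j : ℕ, 0 < j ∧ (x : G) ^ j ∈ gammaP G 3) :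
    ∀ u : grQ G 2, chi c hmul hker0 u = 0 → u = 0 := by
  intro u hu
  obtain ⟨N, a, hN, rfl⟩ := grQ_rep u
  rw [chi_tmul] at hu
  have hN0 : ((N:ℚ))⁻¹ ≠ 0 := inv_ne_zero (Nat.cast_ne_zero.mpr hN.ne')
  have ha0 : chiAdd c hmul hker0 a = 0 := (smul_eq_zero.mp hu).resolve_left hN0
  -- represent a by a group element
  obtain ⟨x, hax⟩ : ∃ x : ↥(gammaP G 2),
      a = Additive.ofMul (Abelianization.of (QuotientGroup.mk x : lcsQuot G 2)) := by
    obtain ⟨b, hb⟩ := QuotientGroup.mk_surjective (s := commutator (lcsQuot G 2)) a.toMul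
    obtain ⟨x, hx⟩ := QuotientGroup.mk_surjective
      (s := (gammaP G 3).subgroupOf (gammaP G 2)) b
    exact ⟨x, by rw [show a = Additive.ofMul a.toMul from rfl, ← hb, ← hx]; rfl⟩
  have hc0 : c x = 0 := by
    rw [hax] at ha0
    rw [← chiAdd_cls c hmul hker0 x]
    exact ha0
  obtain ⟨j, hj, hmem⟩ := hker2 x hc0
  -- torsion
  have htor : (j : ℤ) • a = 0 := by
    rw [hax]
    have h1 : (QuotientGroup.mk x : lcsQuot G 2) ^ j = 1 := by
      rw [← QuotientGroup.mk_pow, QuotientGroup.eq_one_iff]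
      rw [Subgroup.mem_subgroupOf]
      exact hmem
    have h2 : (Abelianization.of (QuotientGroup.mk x : lcsQuot G 2)) ^ j = 1 := by
      rw [← map_pow, h1, map_one]
    show Additive.ofMul ((Abelianization.of (QuotientGroup.mk x : lcsQuot G 2)) ^ (j : ℤ)) = 0
    rw [zpow_natCast, h2]
    rfl
  have hsplit : (((N:ℚ))⁻¹ ⊗ₜ[ℤ] a : grQ G 2)
      = (((N:ℚ) * j)⁻¹) ⊗ₜ[ℤ] ((j:ℤ) • a) := by
    rw [TensorProduct.tmul_smul, TensorProduct.smul_tmul']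
    congr 1
    rw [zsmul_eq_mul]
    have hN0' : ((N:ℚ)) ≠ 0 := Nat.cast_ne_zero.mpr hN.ne'
    have hj0 : ((j:ℚ)) ≠ 0 := Nat.cast_ne_zero.mpr hj.ne'
    field_simp
    norm_cast
  show (((N:ℚ))⁻¹ ⊗ₜ[ℤ] a : grQ G 2) = 0
  rw [hsplit, htor, TensorProduct.tmul_zero]

end Chi


universe u

/-- Lemma 6.6 of [Suciu–Wang].  For every finitely generated group `G`
there is a natural epimorphism of graded `ℚ`-Lie algebras `Φ_G : 𝔥(G) ↠ gr(G;ℚ)`,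
restricting to the identity on `H₁(G;ℚ)` in degree `1`, which is an isomorphism in
degrees `1` and `2`. -/
theorem holonomy_to_gr_epimorphism (G : Type u) [Group G] (hG : Group.FG G)
    (H : Type u) [LieRing H] [LieAlgebra ℚ H] (ι : G → H) (hH : IsHolonomy G H ι)
    (L : Type u) [LieRing L] [LieAlgebra ℚ L] (Lk : ℕ → Submodule ℚ L)
    (cls : ∀ k : ℕ, (gammaP G k) → L) (hL : IsGrLie G L Lk cls) :
    ∃ Φ : H →ₗ⁅ℚ⁆ L,
      Function.Surjective Φ ∧
      (∀ g : G, Φ (ι g) = cls 1 ⟨g, mem_gammaP_one g⟩) ∧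
      (∀ k, (holDeg ι k).map Φ.toLinearMap = Lk k) ∧
      (∀ x ∈ holDeg ι 1, Φ x = 0 → x = 0) ∧
      (∀ x ∈ holDeg ι 2, Φ x = 0 → x = 0) := by
  classical
  -- the degree-one class map on `G`
  set f1 : G → L := fun g => cls 1 ⟨g, mem_gammaP_one g⟩ with hf1
  have hmul1 : ∀ x y : G, f1 (x * y) = f1 x + f1 y := fun x y =>
    hL.map_mul 1 ⟨x, mem_gammaP_one x⟩ ⟨y, mem_gammaP_one y⟩
  -- the degree-two comparison map χ : gr₂(G;ℚ) → L
  have hker0 : ∀ x : ↥(gammaP G 2), (x : G) ∈ gammaP G 3 → cls 2 x = 0 := fun x hx =>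
    (hL.ker 2 x).mpr ⟨1, one_pos, by rwa [pow_one]⟩
  set χ : grQ G 2 →ₗ[ℤ] L := chi (cls 2) (hL.map_mul 2) hker0 with hχ
  have hχinj : ∀ u : grQ G 2, χ u = 0 → u = 0 :=
    chi_injective (cls 2) (hL.map_mul 2) hker0 (fun x hx => (hL.ker 2 x).mp hx)
  -- bracket identity in degree 2
  have hbr : ∀ u v : G, ⁅f1 u, f1 v⁆ = cls 2 ⟨⁅u, v⁆, commElt_mem_gammaP_two u v⟩ :=
    fun u v => hL.bracket 1 1 ⟨u, mem_gammaP_one u⟩ ⟨v, mem_gammaP_one v⟩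
      (commElt_mem_gammaP_two u v)
  -- relations in 𝔥(G) are satisfied by f1
  have hrel : ∀ (s : Finset ℕ) (c : ℕ → ℚ) (x y : ℕ → G), GrTrivial G s c x y →
      ∑ i ∈ s, c i • ⁅f1 (x i), f1 (y i)⁆ = 0 := by
    intro s c x y hgt
    have h0 := congrArg χ hgt
    rw [map_sum, map_zero] at h0
    calc ∑ i ∈ s, c i • ⁅f1 (x i), f1 (y i)⁆
        = ∑ i ∈ s, χ (c i • grCls G 2 ⟨⁅x i, y i⁆, commElt_mem_gammaP_two _ _⟩) := by
          refine Finset.sum_congr rfl fun i _ => ?_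
          rw [hχ, chi_smul_grCls, hbr]
      _ = 0 := h0
  -- construct Φ from the universal property
  obtain ⟨Φ, hΦ1, -⟩ := hH.univ L f1 hmul1 hrel
  -- degree-one piece
  have hmap1 : (holDeg ι 1).map Φ.toLinearMap = Lk 1 := by
    show (Submodule.span ℚ (Set.range ι)).map Φ.toLinearMap = Lk 1
    rw [Submodule.map_span, hL.span 1]
    congr 1
    ext z
    constructor
    · rintro ⟨_, ⟨g, rfl⟩, rfl⟩
      exact ⟨⟨g, mem_gammaP_one g⟩, (hΦ1 g).symm⟩
    · rintro ⟨x, rfl⟩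
      exact ⟨ι (x : G), ⟨(x : G), rfl⟩, hΦ1 (x : G)⟩
  -- brackets of Lk 1 with Lk (m+1) land in Lk (m+2)
  have hbrkLk : ∀ m : ℕ, ∀ a ∈ Lk 1, ∀ b ∈ Lk (m + 1), ⁅a, b⁆ ∈ Lk (m + 2) := by
    intro m a ha
    rw [hL.span 1] at ha
    induction ha using Submodule.span_induction with
    | mem z hz =>
      intro b hb
      rw [hL.span (m + 1)] at hb
      induction hb using Submodule.span_induction with
      | mem w hw =>
        obtain ⟨x, rfl⟩ := hz
        obtain ⟨y, rfl⟩ := hw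
        have hmem : ⁅(y : G), (x : G)⁆ ∈ gammaP G (m + 2) :=
          comm_mem_gammaP_succ m (y : G) y.2 (x : G)
        have hskew : ⁅cls 1 x, cls (m + 1) y⁆
            = - cls (m + 2) ⟨⁅(y : G), (x : G)⁆, hmem⟩ := by
          rw [← hL.bracket (m + 1) 1 y x hmem]
          rw [← lie_skew]
        rw [hskew]
        exact neg_mem (hL.mem _ _)
      | zero => simp
      | add u v hu hv ihu ihv => rw [lie_add]; exact add_mem ihu ihv
      | smul r u hu ihu => rw [lie_smul]; exact Submodule.smul_mem _ _ ihu
    | zero => intro b hb; rw [zero_lie]; exact zero_mem _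
    | add u v hu hv ihu ihv =>
      intro b hb; rw [add_lie]; exact add_mem (ihu b hb) (ihv b hb)
    | smul r u hu ihu =>
      intro b hb; rw [smul_lie]; exact Submodule.smul_mem _ _ (ihu b hb)
  -- the grading is preserved in positive degrees
  have hdeg : ∀ k : ℕ, (holDeg ι (k + 1)).map Φ.toLinearMap = Lk (k + 1) := by
    intro k
    induction k with
    | zero => exact hmap1
    | succ k ih =>
      have hunf : holDeg ι (k + 2) = Submodule.span ℚ
          {z | ∃ a ∈ holDeg ι 1, ∃ b ∈ holDeg ι (k + 1), z = ⁅a, b⁆} := rfl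
      apply le_antisymm
      · rw [hunf, Submodule.map_span, Submodule.span_le]
        rintro _ ⟨z, ⟨a, ha, b, hb, rfl⟩, rfl⟩
        have h1 : Φ a ∈ Lk 1 := by
          rw [← hmap1]; exact Submodule.mem_map_of_mem ha
        have h2 : Φ b ∈ Lk (k + 1) := by
          rw [← ih]; exact Submodule.mem_map_of_mem hb
        have : Φ.toLinearMap ⁅a, b⁆ = ⁅Φ a, Φ b⁆ := Φ.map_lie a b
        rw [this]
        exact hbrkLk k _ h1 _ h2
      · rw [hL.span (k + 2), Submodule.span_le]
        rintro _ ⟨x, rfl⟩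
        have heq : gammaP G (k + 2) = Subgroup.closure
            {z | ∃ p ∈ (⊤ : Subgroup G).lowerCentralSeries k, ∃ q ∈ (⊤ : Subgroup G),
              p * q * p⁻¹ * q⁻¹ = z} := (⊤ : Subgroup G).lowerCentralSeries_succ k
        have key : ∀ g (hg : g ∈ Subgroup.closure
            {z | ∃ p ∈ (⊤ : Subgroup G).lowerCentralSeries k, ∃ q ∈ (⊤ : Subgroup G),
              p * q * p⁻¹ * q⁻¹ = z}),
            ∀ hg' : g ∈ gammaP G (k + 2),
            cls (k + 2) ⟨g, hg'⟩ ∈ (holDeg ι (k + 2)).map Φ.toLinearMap := by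
          intro g hg
          induction hg using Subgroup.closure_induction with
          | mem z hz =>
            intro hg'
            obtain ⟨p, hp, q, -, rfl⟩ := hz
            have hbz : ⁅cls (k + 1) ⟨p, hp⟩, cls 1 ⟨q, mem_gammaP_one q⟩⁆
                = cls (k + 2) ⟨p * q * p⁻¹ * q⁻¹, hg'⟩ :=
              hL.bracket (k + 1) 1 ⟨p, hp⟩ ⟨q, mem_gammaP_one q⟩ hg'
            rw [← hbz]
            have hck : cls (k + 1) ⟨p, hp⟩ ∈ (holDeg ι (k + 1)).map Φ.toLinearMap := by
              rw [ih]; exact hL.mem (k + 1) ⟨p, hp⟩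
            obtain ⟨b, hb, hΦb⟩ := hck
            have hq : cls 1 ⟨q, mem_gammaP_one q⟩ = Φ (ι q) := (hΦ1 q).symm
            have hrw : ⁅cls (k + 1) ⟨p, hp⟩, cls 1 ⟨q, mem_gammaP_one q⟩⁆
                = Φ.toLinearMap (-⁅ι q, b⁆) := by
              rw [map_neg, ← hΦb, hq]
              rw [show (Φ.toLinearMap ⁅ι q, b⁆ : L) = Φ ⁅ι q, b⁆ from rfl, Φ.map_lie]
              rw [show (Φ.toLinearMap b : L) = Φ b from rfl]
              exact (lie_skew (Φ b) (Φ (ι q))).symm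
            rw [hrw]
            refine Submodule.mem_map_of_mem ?_
            refine neg_mem ?_
            rw [hunf]
            exact Submodule.subset_span
              ⟨ι q, Submodule.subset_span ⟨q, rfl⟩, b, hb, rfl⟩
          | one =>
            intro hg'
            have h1 : (⟨(1 : G), hg'⟩ : ↥(gammaP G (k + 2))) = 1 := rfl
            rw [h1, addLike_one (cls (k + 2)) (hL.map_mul (k + 2))]
            exact zero_mem _
          | mul u v hu hv ihu ihv =>
            intro hg'
            have hcu : u ∈ gammaP G (k + 2) := heq ▸ hu
            have hcv : v ∈ gammaP G (k + 2) := heq ▸ hv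
            have h1 : (⟨u * v, hg'⟩ : ↥(gammaP G (k + 2)))
                = ⟨u, hcu⟩ * ⟨v, hcv⟩ := rfl
            rw [h1, hL.map_mul]
            exact add_mem (ihu hcu) (ihv hcv)
          | inv u hu ihu =>
            intro hg'
            have hcu : u ∈ gammaP G (k + 2) := heq ▸ hu
            have h1 : (⟨u⁻¹, hg'⟩ : ↥(gammaP G (k + 2))) = (⟨u, hcu⟩)⁻¹ := rfl
            rw [h1, addLike_inv (cls (k + 2)) (hL.map_mul (k + 2))]
            exact neg_mem (ihu hcu)
        exact key (x : G) (heq ▸ x.2) x.2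
  -- full grading statement
  have hdegAll : ∀ k, (holDeg ι k).map Φ.toLinearMap = Lk k := by
    intro k
    cases k with
    | zero =>
      show (⊥ : Submodule ℚ H).map Φ.toLinearMap = Lk 0
      rw [Submodule.map_bot, hL.zero]
    | succ k => exact hdeg k
  -- surjectivity
  have hsurj : Function.Surjective Φ := by
    have htop : (⊤ : Submodule ℚ L) ≤ LinearMap.range Φ.toLinearMap := by
      rw [← hL.internal.submodule_iSup_eq_top]
      apply iSup_le
      intro k
      rw [← hdegAll k]
      exact LinearMap.map_le_range
    intro y
    obtain ⟨x, hx⟩ := htop (Submodule.mem_top (x := y))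
    exact ⟨x, hx⟩
  -- injectivity in degree 1
  have hinj1 : ∀ x ∈ holDeg ι 1, Φ x = 0 → x = 0 := by
    intro x hx hx0
    have hx' : x ∈ Submodule.span ℚ (Set.range ι) := hx
    rw [Submodule.mem_span_set'] at hx'
    obtain ⟨n, fc, g, hsum⟩ := hx'
    choose a ha using fun i => (g i).2
    obtain ⟨N, m, hN, hm⟩ := rat_clear fc
    have hNQ : ((N : ℚ)) ≠ 0 := Nat.cast_ne_zero.mpr hN.ne'
    -- the image relation
    have himg : ∑ i, fc i • f1 (a i) = 0 := by
      have h2 : ∑ i, fc i • f1 (a i) = Φ.toLinearMap x := by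
        rw [← hsum, map_sum]
        refine Finset.sum_congr rfl fun i _ => ?_
        rw [map_smul, ← ha i]
        exact congrArg (fun t => fc i • t) (hΦ1 (a i)).symm
      rw [h2]
      exact hx0
    -- clear denominators on the L side
    have hzs : ∀ (W : Type u) [AddCommGroup W] [Module ℚ W] (v : Fin n → W),
        ∑ i, m i • v i = (N : ℚ) • ∑ i, fc i • v i := by
      intro W _ _ v
      rw [Finset.smul_sum]
      refine Finset.sum_congr rfl fun i _ => ?_
      rw [← Int.cast_smul_eq_zsmul ℚ, hm i, smul_smul, mul_comm]
    have hw0 : f1 ((List.ofFn fun i => a i ^ m i).prod) = 0 := by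
      rw [addLike_prod_ofFn f1 hmul1, hzs L, himg, smul_zero]
    have hwi : ι ((List.ofFn fun i => a i ^ m i).prod) = 0 := by
      obtain ⟨j, hj, hjm⟩ := (hL.ker 1 ⟨_, mem_gammaP_one _⟩).mp hw0
      exact (hH.ker _).mpr ⟨j, hj, by rwa [← gammaP_two_eq]⟩
    have hxN : (N : ℚ) • x = 0 := by
      have h3 := addLike_prod_ofFn ι hH.map_mul a m
      rw [hwi] at h3
      have h4 : x = ∑ i, fc i • ι (a i) := by
        rw [← hsum]
        exact Finset.sum_congr rfl fun i _ => by rw [ha i]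
      rw [h4, ← hzs H, ← h3]
    have := smul_eq_zero.mp hxN
    tauto
  -- injectivity in degree 2
  have hinj2 : ∀ x ∈ holDeg ι 2, Φ x = 0 → x = 0 := by
    intro x hx hx0
    have hunf2 : holDeg ι 2 = Submodule.span ℚ
        {z | ∃ a ∈ holDeg ι 1, ∃ b ∈ holDeg ι 1, z = ⁅a, b⁆} := rfl
    have hxT : x ∈ Submodule.span ℚ {z : H | ∃ u v : G, z = ⁅ι u, ι v⁆} := by
      rw [hunf2] at hx
      refine Submodule.span_le.mpr ?_ hx
      rintro z ⟨aa, haa, bb, hbb, rfl⟩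
      clear hx hx0
      induction haa using Submodule.span_induction with
      | mem z1 hz1 =>
        induction hbb using Submodule.span_induction with
        | mem z2 hz2 =>
          obtain ⟨u, rfl⟩ := hz1
          obtain ⟨v, rfl⟩ := hz2
          exact Submodule.subset_span ⟨u, v, rfl⟩
        | zero => rw [lie_zero]; exact zero_mem _
        | add u v hu hv ihu ihv => rw [lie_add]; exact add_mem ihu ihv
        | smul r u hu ihu => rw [lie_smul]; exact Submodule.smul_mem _ _ ihu
      | zero => rw [zero_lie]; exact zero_mem _
      | add u v hu hv ihu ihv => rw [add_lie]; exact add_mem ihu ihv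
      | smul r u hu ihu => rw [smul_lie]; exact Submodule.smul_mem _ _ ihu
    rw [Submodule.mem_span_set'] at hxT
    obtain ⟨n, fc, g, hsum⟩ := hxT
    choose u v huv using fun i => (g i).2
    set s : Finset ℕ := Finset.range n with hs
    set c' : ℕ → ℚ := fun j => if h : j < n then fc ⟨j, h⟩ else 0 with hc'
    set xg : ℕ → G := fun j => if h : j < n then u ⟨j, h⟩ else 1 with hxg
    set yg : ℕ → G := fun j => if h : j < n then v ⟨j, h⟩ else 1 with hyg
    have hterm : ∀ i : Fin n,
        c' (i : ℕ) • ⁅ι (xg (i : ℕ)), ι (yg (i : ℕ))⁆ = fc i • (g i : H) := by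
      intro i
      rw [hc', hxg, hyg]
      simp only [dif_pos i.isLt, Fin.eta]
      rw [huv i]
    have hxrep : x = ∑ j ∈ s, c' j • ⁅ι (xg j), ι (yg j)⁆ := by
      rw [hs, ← Fin.sum_univ_eq_sum_range (fun j => c' j • ⁅ι (xg j), ι (yg j)⁆) n,
        ← hsum]
      exact Finset.sum_congr rfl fun i _ => (hterm i).symm
    have hgt : GrTrivial G s c' xg yg := by
      apply hχinj
      rw [map_sum]
      have h5 : ∀ j ∈ s, χ (c' j • grCls G 2 ⟨⁅xg j, yg j⁆, commElt_mem_gammaP_two _ _⟩)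
          = c' j • cls 2 ⟨⁅xg j, yg j⁆, commElt_mem_gammaP_two _ _⟩ := fun j _ => by
        rw [hχ, chi_smul_grCls]
      rw [Finset.sum_congr rfl h5]
      have h6 : ∑ j ∈ s, c' j • cls 2 ⟨⁅xg j, yg j⁆, commElt_mem_gammaP_two _ _⟩
          = Φ.toLinearMap x := by
        rw [hxrep, map_sum]
        refine Finset.sum_congr rfl fun j _ => ?_
        rw [map_smul]
        congr 1
        have h7 : Φ ⁅ι (xg j), ι (yg j)⁆ = cls 2 ⟨⁅xg j, yg j⁆, commElt_mem_gammaP_two _ _⟩ := by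
          rw [Φ.map_lie, hΦ1, hΦ1, hbr]
        exact h7.symm
      rw [h6]
      exact hx0
    have h7 := hH.rel s c' xg yg hgt
    rw [hxrep]
    exact h7
  exact ⟨Φ, hsurj, hΦ1, hdegAll, hinj1, hinj2⟩


end ArXiv170107768
end
end

section
/- Let G be a finitely generated group. For each i ≥ 2 and each k ≤ 2^i − 1, the quotient map q_i: G ↠ G/G^{(i)} induces an isomorphism gr_k(G;ℚ) → gr_k(G/G^{(i)};ℚ) on the degree-k pieces of the rational associated graded Lie algebras. -/
open TensorProduct
open scoped commutatorElement

noncomputable section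

namespace ArXiv170107768

universe u

instance (G : Type u) [Group G] (n : ℕ) : (derivedSeries G n).Normal :=
  derivedSeries_normal G n

/-- `⁅Γ_m, Γ_n⁆ ≤ Γ_{m+n+1}` (0-indexed lower central series), via the three subgroups
lemma applied in the quotient `G/Γ_{m+n+2}`. -/
lemma lcs_commutator_le (G : Type u) [Group G] (n : ℕ) :
    ∀ m : ℕ, ⁅(⊤ : Subgroup G).lowerCentralSeries m, (⊤ : Subgroup G).lowerCentralSeries n⁆ ≤
      (⊤ : Subgroup G).lowerCentralSeries (m + n + 1) := by
  induction n with
  | zero =>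
    intro m
    rw [Subgroup.lowerCentralSeries_zero]
    exact le_of_eq rfl
  | succ n ih =>
    intro m
    set N := (⊤ : Subgroup G).lowerCentralSeries (m + (n + 1) + 1) with hNdef
    let f := QuotientGroup.mk' N
    have hf : Function.Surjective f := QuotientGroup.mk'_surjective N
    have hbot : ∀ H : Subgroup G, H ≤ N → Subgroup.map f H = ⊥ := by
      intro H hH
      rw [Subgroup.map_eq_bot_iff, QuotientGroup.ker_mk']
      exact hH
    have h1 : Subgroup.map f ⁅⁅(⊤ : Subgroup G), (⊤ : Subgroup G).lowerCentralSeries m⁆,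
        (⊤ : Subgroup G).lowerCentralSeries n⁆ = ⊥ := by
      apply hbot
      have e1 : ⁅(⊤ : Subgroup G), (⊤ : Subgroup G).lowerCentralSeries m⁆ = (⊤ : Subgroup G).lowerCentralSeries (m + 1) :=
        Subgroup.commutator_comm _ _
      rw [e1]
      refine le_trans (ih (m + 1)) (le_of_eq ?_)
      congr 1
      omega
    have h2 : Subgroup.map f ⁅⁅(⊤ : Subgroup G).lowerCentralSeries m, (⊤ : Subgroup G).lowerCentralSeries n⁆,
        (⊤ : Subgroup G)⁆ = ⊥ := by
      apply hbot
      refine le_trans (Subgroup.commutator_mono (ih m) le_rfl) (le_of_eq ?_)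
      show (⊤ : Subgroup G).lowerCentralSeries (m + n + 1 + 1) = N
      congr 1 <;> omega
    have h3 : Subgroup.map f ⁅⁅(⊤ : Subgroup G).lowerCentralSeries n, (⊤ : Subgroup G)⁆,
        (⊤ : Subgroup G).lowerCentralSeries m⁆ = ⊥ := by
      rw [Subgroup.map_commutator, Subgroup.map_commutator]
      apply Subgroup.commutator_commutator_eq_bot_of_rotate
      · rw [← Subgroup.map_commutator, ← Subgroup.map_commutator]
        exact h1
      · rw [← Subgroup.map_commutator, ← Subgroup.map_commutator]
        exact h2
    have hle : ⁅⁅(⊤ : Subgroup G).lowerCentralSeries n, (⊤ : Subgroup G)⁆, (⊤ : Subgroup G).lowerCentralSeries m⁆ ≤ N := by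
      rw [← QuotientGroup.ker_mk' N, ← Subgroup.map_eq_bot_iff]
      exact h3
    calc ⁅(⊤ : Subgroup G).lowerCentralSeries m, (⊤ : Subgroup G).lowerCentralSeries (n + 1)⁆
        = ⁅⁅(⊤ : Subgroup G).lowerCentralSeries n, (⊤ : Subgroup G)⁆, (⊤ : Subgroup G).lowerCentralSeries m⁆ :=
          Subgroup.commutator_comm _ _
      _ ≤ N := hle

/-- The derived series is contained in the lower central series with exponential lag:
`G⁽ⁱ⁾ ≤ Γ_{2ⁱ - 1}` (0-indexed). -/
lemma derived_le_lcs (G : Type u) [Group G] (i : ℕ) :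
    derivedSeries G i ≤ (⊤ : Subgroup G).lowerCentralSeries (2 ^ i - 1) := by
  induction i with
  | zero => simp [derivedSeries_zero]
  | succ i ih =>
    have h2 : 1 ≤ 2 ^ i := Nat.one_le_two_pow
    have harith : 2 ^ i - 1 + (2 ^ i - 1) + 1 = 2 ^ (i + 1) - 1 := by
      have : 2 ^ (i + 1) = 2 * 2 ^ i := by rw [pow_succ]; ring
      omega
    calc derivedSeries G (i + 1) = ⁅derivedSeries G i, derivedSeries G i⁆ :=
          derivedSeries_succ G i
      _ ≤ ⁅(⊤ : Subgroup G).lowerCentralSeries (2 ^ i - 1), (⊤ : Subgroup G).lowerCentralSeries (2 ^ i - 1)⁆ :=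
          Subgroup.commutator_mono ih ih
      _ ≤ (⊤ : Subgroup G).lowerCentralSeries (2 ^ i - 1 + (2 ^ i - 1) + 1) := lcs_commutator_le G _ _
      _ = (⊤ : Subgroup G).lowerCentralSeries (2 ^ (i + 1) - 1) := by rw [harith]

/-- A surjective homomorphism maps the lower central series onto the lower central series. -/
lemma lcs_map_surjective {G : Type u} {H : Type v} [Group G] [Group H] (f : G →* H)
    (hf : Function.Surjective f) (n : ℕ) :
    ((⊤ : Subgroup G).lowerCentralSeries n).map f = (⊤ : Subgroup H).lowerCentralSeries n := by
  induction n with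
  | zero =>
    rw [Subgroup.lowerCentralSeries_zero, Subgroup.lowerCentralSeries_zero]
    exact Subgroup.map_top_of_surjective f hf
  | succ n ih =>
    show Subgroup.map f ⁅(⊤ : Subgroup G).lowerCentralSeries n, (⊤ : Subgroup G)⁆ =
      ⁅(⊤ : Subgroup H).lowerCentralSeries n, (⊤ : Subgroup H)⁆
    rw [Subgroup.map_commutator, ih, Subgroup.map_top_of_surjective f hf]

/-- Lemma 6.10 of [Suciu–Wang].  For a finitely generated group `G`,
each `i ≥ 2`, and each degree `k ≤ 2ⁱ - 1`, the quotient map `q_i : G ↠ G/G⁽ⁱ⁾`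
induces an isomorphism `gr_k(G;ℚ) → gr_k(G/G⁽ⁱ⁾;ℚ)`. -/
theorem gr_derived_quotient_iso (G : Type u) [Group G] (hG : Group.FG G)
    (i : ℕ) (hi : 2 ≤ i) (k : ℕ) (hk1 : 1 ≤ k) (hk : k ≤ 2 ^ i - 1) :
    ∃ Φ : grQ G k →ₗ[ℚ] grQ (G ⧸ derivedSeries G i) k,
      (∀ (x : G) (hx : x ∈ gammaP G k)
        (hy : (QuotientGroup.mk x : G ⧸ derivedSeries G i) ∈
          gammaP (G ⧸ derivedSeries G i) k),
        Φ (grCls G k ⟨x, hx⟩) =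
          grCls (G ⧸ derivedSeries G i) k ⟨QuotientGroup.mk x, hy⟩) ∧
      Function.Bijective Φ := by
  classical
  set N := derivedSeries G i with hNdef
  set Q := G ⧸ N with hQdef
  let q : G →* Q := QuotientGroup.mk' N
  have hq : Function.Surjective q := QuotientGroup.mk'_surjective N
  -- `N ≤ Γ_{k+1} G`
  have hNle : N ≤ gammaP G (k + 1) := by
    have h1 : N ≤ (⊤ : Subgroup G).lowerCentralSeries (2 ^ i - 1) := derived_le_lcs G i
    have h2 : (⊤ : Subgroup G).lowerCentralSeries (2 ^ i - 1) ≤ (⊤ : Subgroup G).lowerCentralSeries k :=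
      (⊤ : Subgroup G).lowerCentralSeries_antitone hk
    have h3 : gammaP G (k + 1) = (⊤ : Subgroup G).lowerCentralSeries k := rfl
    rw [h3]
    exact h1.trans h2
  have hmap : ∀ m, gammaP Q m = (gammaP G m).map q := fun m =>
    (lcs_map_surjective q hq (m - 1)).symm
  have hmem : ∀ x : gammaP G k, q (x : G) ∈ gammaP Q k := fun x => by
    rw [hmap]; exact ⟨(x : G), x.2, rfl⟩
  let f : (gammaP G k) →* (gammaP Q k) :=
    (q.comp (gammaP G k).subtype).codRestrict _ hmem
  have hfval : ∀ x : gammaP G k, ((f x : Q)) = q (x : G) := fun x => rfl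
  have hfsurj : Function.Surjective f := by
    rintro ⟨y, hy⟩
    rw [hmap] at hy
    obtain ⟨x, hx, rfl⟩ := hy
    exact ⟨⟨x, hx⟩, rfl⟩
  let φ : (gammaP G k) →* lcsQuot Q k :=
    (QuotientGroup.mk' ((gammaP Q (k + 1)).subgroupOf (gammaP Q k))).comp f
  have hφsurj : Function.Surjective φ :=
    (QuotientGroup.mk'_surjective _).comp hfsurj
  have hker : φ.ker = (gammaP G (k + 1)).subgroupOf (gammaP G k) := by
    ext x
    rw [MonoidHom.mem_ker, Subgroup.mem_subgroupOf]
    show (QuotientGroup.mk (f x) : lcsQuot Q k) = 1 ↔ (x : G) ∈ gammaP G (k + 1)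
    rw [QuotientGroup.eq_one_iff, Subgroup.mem_subgroupOf, hfval x, hmap (k + 1),
      Subgroup.mem_map]
    constructor
    · rintro ⟨y, hy, hyx⟩
      have : y⁻¹ * (x : G) ∈ N := QuotientGroup.eq.mp hyx
      have hx : (x : G) = y * (y⁻¹ * (x : G)) := by group
      rw [hx]
      exact Subgroup.mul_mem _ hy (hNle this)
    · intro hx
      exact ⟨(x : G), hx, rfl⟩
  -- the group isomorphism on the layers of the lower central series
  let e₀ : lcsQuot G k ≃* lcsQuot Q k :=
    (QuotientGroup.quotientMulEquivOfEq hker.symm).trans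
      (QuotientGroup.quotientKerEquivOfSurjective φ hφsurj)
  have he₀ : ∀ x : gammaP G k,
      e₀ (QuotientGroup.mk x : lcsQuot G k) = QuotientGroup.mk (f x) := by
    intro x
    show (QuotientGroup.quotientKerEquivOfSurjective φ hφsurj)
      ((QuotientGroup.quotientMulEquivOfEq hker.symm) (QuotientGroup.mk x)) = _
    rw [QuotientGroup.quotientMulEquivOfEq_mk]
    rfl
  let e₁ : Abelianization (lcsQuot G k) ≃* Abelianization (lcsQuot Q k) :=
    e₀.abelianizationCongr
  let e₂ : Additive (Abelianization (lcsQuot G k)) ≃+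
      Additive (Abelianization (lcsQuot Q k)) := MulEquiv.toAdditive e₁
  let l := e₂.toIntLinearEquiv (modM := AddCommGroup.toIntModule _)
    (modM₂ := AddCommGroup.toIntModule _)
  refine ⟨LinearMap.baseChange ℚ l.toLinearMap, ?_, ?_⟩
  · intro x hx hy
    show LinearMap.baseChange ℚ l.toLinearMap
      ((1 : ℚ) ⊗ₜ[ℤ] Additive.ofMul (Abelianization.of
        (QuotientGroup.mk ⟨x, hx⟩ : lcsQuot G k))) = _
    rw [LinearMap.baseChange_tmul]
    have hl : l.toLinearMap (Additive.ofMul (Abelianization.of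
        (QuotientGroup.mk ⟨x, hx⟩ : lcsQuot G k))) =
        Additive.ofMul (Abelianization.of
          (QuotientGroup.mk (f ⟨x, hx⟩) : lcsQuot Q k)) :=
      congrArg (fun z => Additive.ofMul (Abelianization.of z)) (he₀ ⟨x, hx⟩)
    rw [hl]
    have hfx : f ⟨x, hx⟩ = ⟨(QuotientGroup.mk x : Q), hy⟩ := Subtype.ext rfl
    rw [hfx]
    rfl
  · have hcomp₁ : (LinearMap.baseChange ℚ l.symm.toLinearMap).comp
        (LinearMap.baseChange ℚ l.toLinearMap) = LinearMap.id := by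
      rw [← LinearMap.baseChange_comp]
      have : l.symm.toLinearMap ∘ₗ l.toLinearMap = LinearMap.id := by
        ext z; simp
      rw [this, LinearMap.baseChange_id]
    have hcomp₂ : (LinearMap.baseChange ℚ l.toLinearMap).comp
        (LinearMap.baseChange ℚ l.symm.toLinearMap) = LinearMap.id := by
      rw [← LinearMap.baseChange_comp]
      have : l.toLinearMap ∘ₗ l.symm.toLinearMap = LinearMap.id := by
        ext z; simp
      rw [this, LinearMap.baseChange_id]
    exact Function.bijective_iff_has_inverse.mpr
      ⟨LinearMap.baseChange ℚ l.symm.toLinearMap,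
        fun z => LinearMap.congr_fun hcomp₁ z, fun z => LinearMap.congr_fun hcomp₂ z⟩

end ArXiv170107768
end
end
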